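/- Let ℓ > r ≥ 2 be integers and define f(k) = (k-1)(k-2)···(k-r+1)/k^(ℓ-1) for integers k ≥ r. Then f attains its maximum at a unique integer m in [r, ∞). -/

import Mathlib

/-- Bernoulli-based: if `(e+1)(ρ-1) < (e+2-ρ)K` then `K^(e+2) < (K+1)^(e+1)(K-(ρ-1))`. -/
lemma turan_aux1 (e : ℕ) (ρ K : ℝ) (hρ : 2 ≤ ρ) (hK : ρ ≤ K)
    (hcond : ((e:ℝ)+1)*(ρ-1) < ((e:ℝ)+2-ρ)*K) :
    K^(e+2) < (K+1)^(e+1) * (K - (ρ-1)) := by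
  have hK0 : (0:ℝ) < K := by linarith
  have hb : 1 + ((e:ℝ)+1)*(1/K) ≤ (1+1/K)^(e+1) := by
    have hx : (0:ℝ) ≤ 1/K := by positivity
    have h := one_add_mul_le_pow (a := 1/K) (by linarith) (e+1)
    push_cast at h
    linarith
  have h1 : K^(e+1) + ((e:ℝ)+1)*K^e ≤ (K+1)^(e+1) := by
    have hid : (K+1)^(e+1) = K^(e+1) * (1+1/K)^(e+1) := by
      rw [← mul_pow]; congr 1; field_simp
    rw [hid]
    have h2 : K^(e+1) * (1 + ((e:ℝ)+1)*(1/K)) ≤ K^(e+1) * (1+1/K)^(e+1) :=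
      mul_le_mul_of_nonneg_left hb (by positivity)
    have h3 : K^(e+1) * (1 + ((e:ℝ)+1)*(1/K)) = K^(e+1) + ((e:ℝ)+1)*K^e := by
      rw [pow_succ]
      field_simp
    linarith [h2, h3.symm.le, h3.le]
  have hpe : (0:ℝ) < K^e := pow_pos hK0 e
  have key : (K^(e+1) + ((e:ℝ)+1)*K^e) * (K - (ρ-1)) ≤ (K+1)^(e+1) * (K - (ρ-1)) :=
    mul_le_mul_of_nonneg_right h1 (by linarith)
  have hstep : K^(e+2) < (K^(e+1) + ((e:ℝ)+1)*K^e) * (K - (ρ-1)) := by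
    have he1 : K^(e+1) = K^e * K := pow_succ K e
    have he2 : K^(e+2) = K^e * K * K := by rw [pow_succ, he1]
    rw [he1, he2]
    nlinarith [mul_pos hpe (show (0:ℝ) < ((e:ℝ)+2-ρ)*K - ((e:ℝ)+1)*(ρ-1) by linarith)]
  linarith

/-- Ratio monotonicity step. -/
lemma turan_aux2 (m : ℕ) (ρ K : ℝ) (hρ : 2 ≤ ρ) (hK : ρ ≤ K)
    (h1 : (m:ℝ)*(K-ρ+2) ≤ (ρ-1)*(K+2)) (h2 : (m:ℝ) < K*(K+2)) :
    (K+1)^(2*m+1) * (K-ρ+1) ≤ K^(m+1) * (K+2)^m * (K-ρ+2) := by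
  have hK0 : (0:ℝ) < K := by linarith
  have hKK0 : (0:ℝ) < K*(K+2) := by nlinarith
  set x : ℝ := 1/(K*(K+2)) with hxdef
  have hx0 : 0 < x := by positivity
  have hx1 : x ≤ 1 := by
    rw [hxdef, div_le_one hKK0]; nlinarith
  have hp2 : (K+1)^2 = (K*(K+2))*(1+x) := by
    rw [hxdef]; field_simp; ring
  have hKKm : (K+1)^(2*m) = (K*(K+2))^m * (1+x)^m := by
    rw [pow_mul, hp2, mul_pow]
  have hp0 : (0:ℝ) ≤ (1+x)^m := by positivity
  have key1 : (1+x)^m * (1 - m*x) ≤ 1 := by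
    have hb : 1 - (m:ℝ)*x ≤ (1-x)^m := by
      have h := one_add_mul_le_pow (a := -x) (by linarith) m
      have e1 : (1:ℝ) + (m:ℝ)*(-x) = 1 - m*x := by ring
      have e2 : (1:ℝ) + (-x) = 1 - x := by ring
      rw [e1, e2] at h; exact h
    calc (1+x)^m * (1 - m*x) ≤ (1+x)^m * (1-x)^m := mul_le_mul_of_nonneg_left hb hp0
      _ = ((1+x)*(1-x))^m := (mul_pow _ _ _).symm
      _ = (1-x^2)^m := by ring_nf
      _ ≤ 1 := pow_le_one₀ (by nlinarith) (by nlinarith)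
  have hA0 : (0:ℝ) ≤ (K+1)*(K-ρ+1) := by nlinarith
  have hB0 : (0:ℝ) ≤ K*(K-ρ+2) := by nlinarith
  have hABc : (K+1)*(K-ρ+1) ≤ (K*(K-ρ+2)) * (1 - m*x) := by
    rw [hxdef]
    have hgoal : (K+1)*(K-ρ+1) * (K*(K+2)) ≤ (K*(K-ρ+2)) * ((K*(K+2)) - m) := by
      nlinarith [mul_le_mul_of_nonneg_left h1 hK0.le]
    have hrw : (K*(K-ρ+2)) * (1 - (m:ℝ)*(1/(K*(K+2)))) = (K*(K-ρ+2)) * ((K*(K+2)) - m) / (K*(K+2)) := by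
      field_simp
      try ring
    rw [hrw, le_div_iff₀ hKK0]
    linarith [hgoal]
  have hcore : (1+x)^m * ((K+1)*(K-ρ+1)) ≤ K*(K-ρ+2) := by
    calc (1+x)^m * ((K+1)*(K-ρ+1)) ≤ (1+x)^m * ((K*(K-ρ+2)) * (1 - m*x)) :=
          mul_le_mul_of_nonneg_left hABc hp0
      _ = ((1+x)^m * (1 - m*x)) * (K*(K-ρ+2)) := by ring
      _ ≤ 1 * (K*(K-ρ+2)) := mul_le_mul_of_nonneg_right key1 hB0
      _ = K*(K-ρ+2) := one_mul _
  have hlhs : (K+1)^(2*m+1) * (K-ρ+1) = (K*(K+2))^m * ((1+x)^m * ((K+1)*(K-ρ+1))) := by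
    rw [pow_succ, hKKm]; ring
  have hrhs : K^(m+1) * (K+2)^m * (K-ρ+2) = (K*(K+2))^m * (K*(K-ρ+2)) := by
    rw [mul_pow, pow_succ]; ring
  rw [hlhs, hrhs]
  exact mul_le_mul_of_nonneg_left hcore (by positivity)

lemma turan_neq (r ℓ k : ℕ) (hr : 2 ≤ r) (hℓ : r < ℓ) (hk : r ≤ k) :
    k^ℓ ≠ (k+1)^(ℓ-1) * (k - (r-1)) := by
  intro h
  have hcop : Nat.Coprime (k+1) k := by
    have h2 : Nat.gcd (1 + k) k = Nat.gcd 1 k := Nat.gcd_add_self_left k 1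
    simpa [Nat.Coprime, Nat.add_comm] using h2
  have hcop2 : Nat.Coprime ((k+1)^(ℓ-1)) (k^ℓ) := hcop.pow _ _
  have hdvd : (k+1)^(ℓ-1) ∣ k^ℓ := ⟨k - (r-1), h⟩
  have h1 : (k+1)^(ℓ-1) = 1 := Nat.Coprime.eq_one_of_dvd hcop2 hdvd
  have h2 : 1 < (k+1)^(ℓ-1) := Nat.one_lt_pow (by omega) (by omega)
  omega

/-- Let `ℓ > r ≥ 2` and `f k = (k-1)(k-2)⋯(k-r+1)/k^(ℓ-1)` for integers `k ≥ r`.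
Then `f` attains its maximum at a unique integer `m ≥ r` (strictly above all other values). -/
theorem turan_unique_maximizer (r ℓ : ℕ) (hr : 2 ≤ r) (hℓ : r < ℓ)
    (f : ℕ → ℝ)
    (hf : ∀ k, f k = (∏ i ∈ Finset.range (r - 1), ((k : ℝ) - (i + 1))) / (k : ℝ) ^ (ℓ - 1)) :
    ∃! m : ℕ, r ≤ m ∧ ∀ k, r ≤ k → k ≠ m → f k < f m := by
  -- structural decomposition of f
  have hfk : ∀ k : ℕ, r ≤ k → ∃ R : ℝ, 0 < R ∧
      f k = R * ((k:ℝ) - ((r:ℝ)-1)) / (k:ℝ)^(ℓ-1) ∧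
      f (k+1) = R * (k:ℝ) / ((k:ℝ)+1)^(ℓ-1) := by
    intro k hk
    refine ⟨∏ i ∈ Finset.range (r-2), ((k:ℝ) - (i+1)), ?_, ?_, ?_⟩
    · apply Finset.prod_pos
      intro i hi
      have hi' : i < r - 2 := Finset.mem_range.mp hi
      have hik : (i:ℝ) + 1 < (k:ℝ) := by
        have : i + 1 < k := by omega
        exact_mod_cast this
      linarith
    · rw [hf k]
      congr 1
      have hr1 : r - 1 = (r-2) + 1 := by omega
      rw [hr1, Finset.prod_range_succ]
      congr 1
      have : ((r-2 : ℕ) : ℝ) = (r:ℝ) - 2 := by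
        push_cast [Nat.cast_sub (show 2 ≤ r from hr)]
        ring
      rw [this]
      ring
    · rw [hf (k+1)]
      push_cast
      congr 1
      have hr1 : r - 1 = (r-2) + 1 := by omega
      rw [hr1, Finset.prod_range_succ']
      congr 1
      · apply Finset.prod_congr rfl
        intro i _
        push_cast
        ring
      · push_cast
        ring
  -- comparison lemmas
  have hcastb : ∀ k : ℕ, r ≤ k →
      (((k+1)^(ℓ-1) * (k - (r-1)) : ℕ) : ℝ) = ((k:ℝ)+1)^(ℓ-1) * ((k:ℝ) - ((r:ℝ)-1)) := by
    intro k hk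
    push_cast [Nat.cast_sub (show r - 1 ≤ k by omega), Nat.cast_sub (show 1 ≤ r by omega)]
    ring
  have hdec : ∀ k, r ≤ k → k^ℓ < (k+1)^(ℓ-1) * (k - (r-1)) → f (k+1) < f k := by
    intro k hk hlt
    obtain ⟨R, hR, e1, e2⟩ := hfk k hk
    have hK0 : (0:ℝ) < (k:ℝ) := by
      have : 0 < k := by omega
      exact_mod_cast this
    have hltR : (k:ℝ)^ℓ < ((k:ℝ)+1)^(ℓ-1) * ((k:ℝ) - ((r:ℝ)-1)) := by
      have h := (Nat.cast_lt (α := ℝ)).mpr hlt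
      rw [hcastb k hk] at h
      push_cast at h
      exact h
    rw [e1, e2, div_lt_div_iff₀ (by positivity) (by positivity)]
    have hKpow : (k:ℝ)^(ℓ-1) * (k:ℝ) = (k:ℝ)^ℓ := by
      rw [← pow_succ]
      congr 1
      omega
    nlinarith [mul_lt_mul_of_pos_left hltR hR, hKpow]
  have hinc : ∀ k, r ≤ k → (k+1)^(ℓ-1) * (k - (r-1)) < k^ℓ → f k < f (k+1) := by
    intro k hk hlt
    obtain ⟨R, hR, e1, e2⟩ := hfk k hk
    have hK0 : (0:ℝ) < (k:ℝ) := by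
      have : 0 < k := by omega
      exact_mod_cast this
    have hltR : ((k:ℝ)+1)^(ℓ-1) * ((k:ℝ) - ((r:ℝ)-1)) < (k:ℝ)^ℓ := by
      have h := (Nat.cast_lt (α := ℝ)).mpr hlt
      rw [hcastb k hk] at h
      push_cast at h
      exact h
    rw [e1, e2, div_lt_div_iff₀ (by positivity) (by positivity)]
    have hKpow : (k:ℝ)^(ℓ-1) * (k:ℝ) = (k:ℝ)^ℓ := by
      rw [← pow_succ]
      congr 1
      omega
    nlinarith [mul_lt_mul_of_pos_left hltR hR, hKpow]
  -- eventual decrease (direct regime)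
  have hdirect : ∀ k, r ≤ k → (ℓ-1)*(r-1) < (ℓ-r)*k → k^ℓ < (k+1)^(ℓ-1) * (k - (r-1)) := by
    intro k hk hcond
    have hcast : ((k:ℝ))^ℓ < ((k:ℝ)+1)^(ℓ-1) * ((k:ℝ) - ((r:ℝ)-1)) := by
      obtain ⟨e, rfl⟩ : ∃ e, ℓ = e + 2 := ⟨ℓ - 2, by omega⟩
      have hℓe : (e + 2) - 1 = e + 1 := by omega
      rw [hℓe]
      apply turan_aux1 e (r:ℝ) (k:ℝ) (by exact_mod_cast hr) (by exact_mod_cast hk)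
      have h1 : (((e+2-1)*(r-1) : ℕ):ℝ) < (((e+2-r)*k : ℕ):ℝ) := by exact_mod_cast hcond
      push_cast [Nat.cast_sub (show 1 ≤ r by omega), Nat.cast_sub (show r ≤ e + 2 by omega),
        Nat.cast_sub (show 1 ≤ e + 2 by omega)] at h1
      nlinarith [h1]
    have := hcastb k hk
    rw [← this] at hcast
    have : ((k^ℓ : ℕ):ℝ) < (((k+1)^(ℓ-1) * (k - (r-1)) : ℕ):ℝ) := by
      push_cast
      push_cast at hcast
      exact hcast
    exact_mod_cast this
  -- persistence of decrease
  have hstep : ∀ k, r ≤ k → k^ℓ < (k+1)^(ℓ-1) * (k - (r-1)) →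
      (k+1)^ℓ < (k+2)^(ℓ-1) * ((k+1) - (r-1)) := by
    intro k hk hlt
    by_cases hcase : (ℓ-1)*(r-1) < (ℓ-r)*(k+1)
    · have h := hdirect (k+1) (by omega) hcase
      have : k + 1 + 1 = k + 2 := rfl
      rw [this] at h
      exact h
    · push_neg at hcase
      -- real quantities
      set K : ℝ := (k:ℝ) with hKdef
      have hKr : (r:ℝ) ≤ K := by rw [hKdef]; exact_mod_cast hk
      have hrR : (2:ℝ) ≤ (r:ℝ) := by exact_mod_cast hr
      have hℓR : (r:ℝ) < (ℓ:ℝ) := by exact_mod_cast hℓ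
      have hcaseR : ((ℓ:ℝ) - (r:ℝ)) * (K + 1) ≤ ((ℓ:ℝ)-1) * ((r:ℝ)-1) := by
        have h := (Nat.cast_le (α := ℝ)).mpr hcase
        push_cast [Nat.cast_sub (show r ≤ ℓ by omega), Nat.cast_sub (show 1 ≤ ℓ by omega),
          Nat.cast_sub (show 1 ≤ r by omega)] at h
        linarith
      have hm1 : ((ℓ-1 : ℕ):ℝ) * (K - (r:ℝ) + 2) ≤ ((r:ℝ)-1) * (K+2) := by
        have hc : ((ℓ-1 : ℕ):ℝ) = (ℓ:ℝ) - 1 := by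
          push_cast [Nat.cast_sub (show 1 ≤ ℓ by omega)]; ring
        rw [hc]
        nlinarith [hcaseR]
      have hm2 : ((ℓ-1 : ℕ):ℝ) < K * (K+2) := by
        have hc : ((ℓ-1 : ℕ):ℝ) = (ℓ:ℝ) - 1 := by
          push_cast [Nat.cast_sub (show 1 ≤ ℓ by omega)]; ring
        rw [hc]
        nlinarith [hcaseR, mul_le_mul hKr hKr (by linarith) (by linarith),
          mul_le_mul_of_nonneg_left (show (r:ℝ)+1 ≤ K+1 by linarith) (show (0:ℝ) ≤ (ℓ:ℝ)-(r:ℝ) by linarith)]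
      have haux := turan_aux2 (ℓ-1) (r:ℝ) K hrR hKr hm1 hm2
      -- now transfer
      have hlt' : K^ℓ ≤ (K+1)^(ℓ-1) * (K - (r:ℝ) + 1) := by
        have h := (Nat.cast_lt (α := ℝ)).mpr hlt
        rw [hcastb k hk] at h
        push_cast at h
        linarith [h]
      have hpos1 : (0:ℝ) < (K+1)^(ℓ-1) * (K - (r:ℝ) + 1) := by
        apply mul_pos
        · positivity
        · linarith
      have hgoalR : (K+1)^ℓ ≤ (K+2)^(ℓ-1) * (K - (r:ℝ) + 2) := by
        have hmul : (K+1)^ℓ * ((K+1)^(ℓ-1) * (K - (r:ℝ) + 1)) ≤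
            ((K+2)^(ℓ-1) * (K - (r:ℝ) + 2)) * ((K+1)^(ℓ-1) * (K - (r:ℝ) + 1)) := by
          calc (K+1)^ℓ * ((K+1)^(ℓ-1) * (K - (r:ℝ) + 1))
              = (K+1)^(ℓ + (ℓ-1)) * (K - (r:ℝ) + 1) := by rw [pow_add]; ring
            _ = (K+1)^(2*(ℓ-1)+1) * (K - (r:ℝ) + 1) := by
                rw [show ℓ + (ℓ-1) = 2*(ℓ-1)+1 by omega]
            _ ≤ K^((ℓ-1)+1) * (K+2)^(ℓ-1) * (K - (r:ℝ) + 2) := haux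
            _ = K^ℓ * ((K+2)^(ℓ-1) * (K - (r:ℝ) + 2)) := by
                rw [show (ℓ-1)+1 = ℓ by omega]; ring
            _ ≤ ((K+1)^(ℓ-1) * (K - (r:ℝ) + 1)) * ((K+2)^(ℓ-1) * (K - (r:ℝ) + 2)) := by
                apply mul_le_mul_of_nonneg_right hlt'
                have : (0:ℝ) ≤ K - (r:ℝ) + 2 := by linarith
                positivity
            _ = ((K+2)^(ℓ-1) * (K - (r:ℝ) + 2)) * ((K+1)^(ℓ-1) * (K - (r:ℝ) + 1)) := by ring
        exact le_of_mul_le_mul_right hmul hpos1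
      -- cast back to ℕ, nonstrict
      have hle : (k+1)^ℓ ≤ (k+2)^(ℓ-1) * ((k+1) - (r-1)) := by
        have hc2 : (((k+2)^(ℓ-1) * ((k+1) - (r-1)) : ℕ):ℝ) =
            (K+2)^(ℓ-1) * (K - (r:ℝ) + 2) := by
          have h := hcastb (k+1) (by omega)
          push_cast at h ⊢
          push_cast [Nat.cast_sub (show r - 1 ≤ k + 1 by omega),
            Nat.cast_sub (show 1 ≤ r by omega)]
          ring
        have : (((k+1)^ℓ : ℕ):ℝ) ≤ (((k+2)^(ℓ-1) * ((k+1) - (r-1)) : ℕ):ℝ) := by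
          rw [hc2]
          push_cast
          exact hgoalR
        exact_mod_cast this
      exact lt_of_le_of_ne hle (turan_neq r ℓ (k+1) hr hℓ (by omega))
  -- existence of a decrease point
  have hex : ∃ n : ℕ, (r+n)^ℓ < (r+n+1)^(ℓ-1) * ((r+n) - (r-1)) := by
    refine ⟨(ℓ-1)*(r-1), hdirect _ (by omega) ?_⟩
    have h2 : r + (ℓ-1)*(r-1) ≤ (ℓ-r) * (r + (ℓ-1)*(r-1)) :=
      Nat.le_mul_of_pos_left _ (by omega)
    have h3 : (ℓ-1)*(r-1) < r + (ℓ-1)*(r-1) := by omega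
    omega
  classical
  set N := Nat.find hex with hNdef
  set m := r + N with hmdef
  have hrm : r ≤ m := by omega
  have hm : m^ℓ < (m+1)^(ℓ-1) * (m - (r-1)) := Nat.find_spec hex
  have hmin : ∀ j, r ≤ j → j < m → (j+1)^(ℓ-1) * (j - (r-1)) < j^ℓ := by
    intro j hj hjm
    have hn : j - r < N := by omega
    have h := Nat.find_min hex hn
    rw [show r + (j - r) = j by omega] at h
    have hle : (j+1)^(ℓ-1) * (j - (r-1)) ≤ j^ℓ := Nat.le_of_not_lt h
    exact lt_of_le_of_ne hle (turan_neq r ℓ j hr hℓ hj).symm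
  have hdecall : ∀ d : ℕ, (m+d)^ℓ < (m+d+1)^(ℓ-1) * ((m+d) - (r-1)) := by
    intro d
    induction d with
    | zero => exact hm
    | succ d ih =>
        have h := hstep (m+d) (by omega) ih
        have e1 : m + d + 1 = m + (d+1) := by omega
        have e2 : m + d + 2 = m + (d+1) + 1 := by omega
        rw [e1, e2] at h
        exact h
  -- monotonicity of f
  have hup : ∀ j, r ≤ j → j < m → f j < f (j+1) := by
    intro j hj hjm
    exact hinc j hj (hmin j hj hjm)
  have hdown : ∀ j, m ≤ j → f (j+1) < f j := by
    intro j hj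
    have h := hdecall (j - m)
    rw [show m + (j - m) = j by omega] at h
    exact hdec j (by omega) h
  -- chains
  have hchain_up : ∀ d : ℕ, ∀ j, r ≤ j → j + d = m → 0 < d → f j < f m := by
    intro d
    induction d with
    | zero => intro j _ _ h0; omega
    | succ d ih =>
        intro j hj hjd _
        have hjm : j < m := by omega
        have h1 : f j < f (j+1) := hup j hj hjm
        by_cases hd : d = 0
        · have : j + 1 = m := by omega
          rw [this] at h1
          exact h1
        · exact lt_trans h1 (ih (j+1) (by omega) (by omega) (by omega))
  have hchain_down : ∀ d : ℕ, 0 < d → f (m+d) < f m := by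
    intro d
    induction d with
    | zero => intro h0; omega
    | succ d ih =>
        intro _
        have h1 : f (m+d+1) < f (m+d) := hdown (m+d) (by omega)
        by_cases hd : d = 0
        · subst hd
          simpa using h1
        · have h2 : f (m+d) < f m := ih (by omega)
          have e1 : m + (d+1) = m + d + 1 := by omega
          rw [e1]
          exact lt_trans h1 h2
  have hmax : ∀ k, r ≤ k → k ≠ m → f k < f m := by
    intro k hk hkm
    rcases lt_or_gt_of_ne hkm with h | h
    · exact hchain_up (m - k) k hk (by omega) (by omega)
    · have h2 := hchain_down (k - m) (by omega)
      rw [show m + (k - m) = k by omega] at h2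
      exact h2
  refine ⟨m, ⟨hrm, hmax⟩, ?_⟩
  rintro m' ⟨hm'r, hm'⟩
  by_contra hne
  have h1 : f m < f m' := hm' m hrm (fun h => hne h.symm)
  have h2 : f m' < f m := hmax m' hm'r hne
  linarith
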